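/- Let π be the stationary distribution of the queueing-inventory process Z. Then for every n₂ ∈ ℕ₀: P(X₂=n₂, 0<Y≤s)·p·λ₂ + P(X₂=n₂, Y>s)·λ₂ = P(X₁=0, X₂=n₂+1, Y>0)·μ. -/

import Mathlib

lemma sum_ind (b : ℕ) (P : ℕ → Prop) [DecidablePred P] (f : ℕ → ℝ) (t : Finset ℕ)
    (ht : (Finset.range (b+1)).filter P = t) :
    ∑ k ∈ Finset.range (b+1), f k * (if P k then (1:ℝ) else 0) = ∑ k ∈ t, f k := by
  rw [← ht, Finset.sum_filter]
  exact Finset.sum_congr rfl fun k _ => by split <;> simp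

lemma sum_ind_c (b : ℕ) (P : ℕ → Prop) [DecidablePred P] (f : ℕ → ℝ) (c : ℝ) (t : Finset ℕ)
    (ht : (Finset.range (b+1)).filter P = t) :
    ∑ k ∈ Finset.range (b+1), (f k * (if P k then (1:ℝ) else 0)) * c = (∑ k ∈ t, f k) * c := by
  rw [← Finset.sum_mul, sum_ind b P f t ht]

lemma sum_shift_up (b : ℕ) (f : ℕ → ℝ) :
    ∑ k ∈ Finset.range b, f (k+1) = ∑ k ∈ Finset.Icc 1 b, f k := by
  induction b with
  | zero => simp
  | succ b ih => rw [Finset.sum_range_succ, ih, Finset.sum_Icc_succ_top (by omega)]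

lemma sum_shift_down (b : ℕ) (f : ℕ → ℝ) :
    ∑ k ∈ Finset.Icc 1 b, f (k-1) = ∑ k ∈ Finset.range b, f k := by
  rw [← sum_shift_up b (fun k => f (k-1))]; simp

lemma tsum_shift_down (f : ℕ → ℝ) (hf : Summable f) :
    ∑' n, f (n-1) * (if 0 < n then (1:ℝ) else 0) = ∑' n, f n := by
  have hg : Summable (fun n => f (n-1) * (if 0 < n then (1:ℝ) else 0)) := by
    rw [← summable_nat_add_iff 1]; simpa using hf
  rw [Summable.tsum_eq_zero_add hg]; simp

lemma summable_shift_down (f : ℕ → ℝ) (hf : Summable f) :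
    Summable (fun n => f (n-1) * (if 0 < n then (1:ℝ) else 0)) := by
  rw [← summable_nat_add_iff 1]; simpa using hf

lemma tsum_shift_up (f : ℕ → ℝ) (hf : Summable f) :
    ∑' n, f (n+1) = (∑' n, f n) - f 0 := by
  rw [Summable.tsum_eq_zero_add hf]; ring

lemma summable_mul_ind (f : ℕ → ℝ) (hf : Summable f) (hnn : ∀ n, 0 ≤ f n)
    (P : ℕ → Prop) [DecidablePred P] :
    Summable (fun n => f n * (if P n then (1:ℝ) else 0)) := by
  exact Summable.of_nonneg_of_le (fun n => by split <;> simp [hnn n])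
    (fun n => by split <;> simp [hnn n]) hf

lemma tsum_mul_indpos (f : ℕ → ℝ) (hf : Summable f) (hnn : ∀ n, 0 ≤ f n) :
    ∑' n, f n * (if 0 < n then (1:ℝ) else 0) = (∑' n, f n) - f 0 := by
  rw [Summable.tsum_eq_zero_add (summable_mul_ind f hf hnn _)]; simp
  exact tsum_shift_up f hf

def GlobalBalance (b s : ℕ) (lam1 lam2 mu nu p : ℝ) (pi : ℕ → ℕ → ℕ → ℝ) : Prop :=
  ∀ n₁ n₂ k, k ≤ b →
    pi n₁ n₂ k *
        ((lam1 + p * lam2) * (if 0 < k ∧ k ≤ s then 1 else 0)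
          + (lam1 + lam2) * (if s < k then 1 else 0)
          + mu * (if 0 < n₁ + n₂ then 1 else 0) * (if 0 < k then 1 else 0)
          + nu * (if k < b then 1 else 0))
      = pi (n₁ - 1) n₂ k * lam1 * (if 0 < n₁ then 1 else 0) * (if 0 < k then 1 else 0)
        + pi n₁ (n₂ - 1) k * (p * lam2) * (if 0 < n₂ then 1 else 0) *
            (if 0 < k ∧ k ≤ s then 1 else 0)
        + pi n₁ (n₂ - 1) k * lam2 * (if 0 < n₂ then 1 else 0) * (if s < k then 1 else 0)
        + pi (n₁ + 1) n₂ (k + 1) * mu * (if k < b then 1 else 0)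
        + pi n₁ (n₂ + 1) (k + 1) * mu * (if n₁ = 0 then 1 else 0) * (if k < b then 1 else 0)
        + pi n₁ n₂ (k - 1) * nu * (if 0 < k then 1 else 0)

theorem stmt_9 (b s : ℕ) (lam1 lam2 mu nu p : ℝ)
    (hb : 2 ≤ b) (hs : 0 < s) (hsb : s < b)
    (h1 : 0 < lam1) (h2 : 0 < lam2) (hmu : 0 < mu) (hnu : 0 < nu)
    (hp0 : 0 ≤ p) (hp1 : p ≤ 1)
    (pi : ℕ → ℕ → ℕ → ℝ)
    (hnn : ∀ n₁ n₂ k, 0 ≤ pi n₁ n₂ k)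
    (hsum : Summable (fun z : ℕ × ℕ => ∑ k ∈ Finset.range (b + 1), pi z.1 z.2 k))
    (hprob : ∑' z : ℕ × ℕ, ∑ k ∈ Finset.range (b + 1), pi z.1 z.2 k = 1)
    (hGB : GlobalBalance b s lam1 lam2 mu nu p pi)
    :
    ∀ n₂ : ℕ,
      (∑' n₁ : ℕ, ∑ k ∈ Finset.Icc 1 s, pi n₁ n₂ k) * (p * lam2)
        + (∑' n₁ : ℕ, ∑ k ∈ Finset.Icc (s + 1) b, pi n₁ n₂ k) * lam2
      = (∑ k ∈ Finset.Icc 1 b, pi 0 (n₂ + 1) k) * mu := by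
  -- summability of slices
  have hrow : ∀ m, Summable (fun n₁ => ∑ k ∈ Finset.range (b+1), pi n₁ m k) := by
    intro m
    exact hsum.comp_injective (i := fun n₁ => (n₁, m)) (fun a a' h => by simpa using h)
  have hS : ∀ m k, k ≤ b → Summable (fun n₁ => pi n₁ m k) := by
    intro m k hk
    exact Summable.of_nonneg_of_le (fun n₁ => hnn _ _ _)
      (fun n₁ => Finset.single_le_sum (f := fun j => pi n₁ m j) (fun i _ => hnn _ _ _)
        (Finset.mem_range.2 (Nat.lt_succ_of_le hk))) (hrow m)
  -- summed (over n₁) balance equation at fixed level m and inventory k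
  have hEq : ∀ m k, k ≤ b →
      ((∑' n₁, pi n₁ m k) * (if 0 < k ∧ k ≤ s then (1:ℝ) else 0)) * (lam1 + p * lam2)
      + ((∑' n₁, pi n₁ m k) * (if s < k then (1:ℝ) else 0)) * (lam1 + lam2)
      + ((∑' n₁, pi n₁ m k) * (if k < b then (1:ℝ) else 0)) * nu
      + ((∑' n₁, pi n₁ m k) * (if 0 < k then (1:ℝ) else 0)) * mu
      - (pi 0 m k * (if 0 < k then (1:ℝ) else 0)) * ((1 - (if 0 < m then (1:ℝ) else 0)) * mu)
      =
      ((∑' n₁, pi n₁ m k) * (if 0 < k then (1:ℝ) else 0)) * lam1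
      + ((∑' n₁, pi n₁ (m-1) k) * (if 0 < k ∧ k ≤ s then (1:ℝ) else 0)) *
          (p * lam2 * (if 0 < m then (1:ℝ) else 0))
      + ((∑' n₁, pi n₁ (m-1) k) * (if s < k then (1:ℝ) else 0)) *
          (lam2 * (if 0 < m then (1:ℝ) else 0))
      + ((∑' n₁, pi n₁ m (k+1)) * (if k < b then (1:ℝ) else 0)) * mu
      - (pi 0 m (k+1) * (if k < b then (1:ℝ) else 0)) * mu
      + (pi 0 (m+1) (k+1) * (if k < b then (1:ℝ) else 0)) * mu
      + ((∑' n₁, pi n₁ m (k-1)) * (if 0 < k then (1:ℝ) else 0)) * nu := by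
    intro m k hk
    have hsk : Summable (fun n₁ => pi n₁ m k) := hS m k hk
    have hsk' : Summable (fun n₁ => pi n₁ (m-1) k) := hS (m-1) k hk
    have hskm : Summable (fun n₁ => pi n₁ m (k-1)) := hS m (k-1) (le_trans (Nat.sub_le _ _) hk)
    have s1 : Summable (fun n₁ => (pi (n₁-1) m k * (if 0 < n₁ then (1:ℝ) else 0)) *
        (lam1 * (if 0 < k then (1:ℝ) else 0))) :=
      (summable_shift_down _ hsk).mul_right _
    have s2 : Summable (fun n₁ => pi n₁ (m-1) k *
        ((p * lam2) * (if 0 < m then (1:ℝ) else 0) * (if 0 < k ∧ k ≤ s then (1:ℝ) else 0))) :=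
      hsk'.mul_right _
    have s3 : Summable (fun n₁ => pi n₁ (m-1) k *
        (lam2 * (if 0 < m then (1:ℝ) else 0) * (if s < k then (1:ℝ) else 0))) :=
      hsk'.mul_right _
    have s4 : Summable (fun n₁ => pi (n₁+1) m (k+1) * (mu * (if k < b then (1:ℝ) else 0))) := by
      by_cases hkb : k < b
      · exact ((summable_nat_add_iff 1).2 (hS m (k+1) hkb)).mul_right _
      · have : (fun n₁ => pi (n₁+1) m (k+1) * (mu * (if k < b then (1:ℝ) else 0))) =
            (fun _ => (0:ℝ)) := funext fun n => by simp [hkb]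
        rw [this]; exact summable_zero
    have s5 : Summable (fun n₁ => (pi n₁ (m+1) (k+1) * (if n₁ = 0 then (1:ℝ) else 0)) *
        (mu * (if k < b then (1:ℝ) else 0))) := by
      apply Summable.mul_right
      apply summable_of_ne_finset_zero (s := {0})
      intro n hn
      simp only [Finset.mem_singleton] at hn
      simp [hn]
    have s6 : Summable (fun n₁ => pi n₁ m (k-1) * (nu * (if 0 < k then (1:ℝ) else 0))) :=
      hskm.mul_right _
    have hind : ∑' n₁, pi n₁ m k * (if 0 < n₁ + m then (1:ℝ) else 0)
        = (∑' n₁, pi n₁ m k) - (1 - (if 0 < m then (1:ℝ) else 0)) * pi 0 m k := by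
      rcases Nat.eq_zero_or_pos m with hm | hm
      · subst hm
        simp only [Nat.add_zero]
        rw [tsum_mul_indpos _ hsk (fun n => hnn _ _ _)]
        norm_num
      · have hone : ∀ n₁, (if 0 < n₁ + m then (1:ℝ) else 0) = 1 := fun n₁ => if_pos (by omega)
        simp [hone, hm]
    have hL : (∑' n₁, pi n₁ m k *
          ((lam1 + p * lam2) * (if 0 < k ∧ k ≤ s then 1 else 0)
            + (lam1 + lam2) * (if s < k then 1 else 0)
            + mu * (if 0 < n₁ + m then 1 else 0) * (if 0 < k then 1 else 0)
            + nu * (if k < b then 1 else 0)))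
        = ((∑' n₁, pi n₁ m k) * (if 0 < k ∧ k ≤ s then (1:ℝ) else 0)) * (lam1 + p * lam2)
          + ((∑' n₁, pi n₁ m k) * (if s < k then (1:ℝ) else 0)) * (lam1 + lam2)
          + ((∑' n₁, pi n₁ m k) * (if k < b then (1:ℝ) else 0)) * nu
          + ((∑' n₁, pi n₁ m k) * (if 0 < k then (1:ℝ) else 0)) * mu
          - (pi 0 m k * (if 0 < k then (1:ℝ) else 0)) * ((1 - (if 0 < m then (1:ℝ) else 0)) * mu) := by
      have e1 : (fun n₁ => pi n₁ m k *
          ((lam1 + p * lam2) * (if 0 < k ∧ k ≤ s then 1 else 0)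
            + (lam1 + lam2) * (if s < k then 1 else 0)
            + mu * (if 0 < n₁ + m then 1 else 0) * (if 0 < k then 1 else 0)
            + nu * (if k < b then 1 else 0)))
          = (fun n₁ => pi n₁ m k *
              ((lam1 + p * lam2) * (if 0 < k ∧ k ≤ s then (1:ℝ) else 0)
                + (lam1 + lam2) * (if s < k then (1:ℝ) else 0)
                + nu * (if k < b then (1:ℝ) else 0))
            + (pi n₁ m k * (if 0 < n₁ + m then (1:ℝ) else 0)) *
                (mu * (if 0 < k then (1:ℝ) else 0))) := funext fun n₁ => by ring
      rw [e1, Summable.tsum_add (hsk.mul_right _)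
          ((summable_mul_ind _ hsk (fun n => hnn _ _ _) _).mul_right _),
        tsum_mul_right, tsum_mul_right, hind]
      ring
    have hD : (∑' n₁, pi (n₁+1) m (k+1)) * (mu * (if k < b then (1:ℝ) else 0))
        = ((∑' n₁, pi n₁ m (k+1)) - pi 0 m (k+1)) * (mu * (if k < b then (1:ℝ) else 0)) := by
      by_cases hkb : k < b
      · rw [tsum_shift_up _ (hS m (k+1) hkb)]
      · simp [hkb]
    have hE5 : ∑' n₁, pi n₁ (m+1) (k+1) * (if n₁ = 0 then (1:ℝ) else 0)
        = pi 0 (m+1) (k+1) := by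
      rw [tsum_eq_single 0 (fun n hn => by simp [hn])]; simp
    have hR : (∑' n₁,
          (pi (n₁ - 1) m k * lam1 * (if 0 < n₁ then 1 else 0) * (if 0 < k then 1 else 0)
          + pi n₁ (m - 1) k * (p * lam2) * (if 0 < m then 1 else 0) *
              (if 0 < k ∧ k ≤ s then 1 else 0)
          + pi n₁ (m - 1) k * lam2 * (if 0 < m then 1 else 0) * (if s < k then 1 else 0)
          + pi (n₁ + 1) m (k + 1) * mu * (if k < b then 1 else 0)
          + pi n₁ (m + 1) (k + 1) * mu * (if n₁ = 0 then 1 else 0) * (if k < b then 1 else 0)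
          + pi n₁ m (k - 1) * nu * (if 0 < k then 1 else 0)))
        = ((∑' n₁, pi n₁ m k) * (if 0 < k then (1:ℝ) else 0)) * lam1
          + ((∑' n₁, pi n₁ (m-1) k) * (if 0 < k ∧ k ≤ s then (1:ℝ) else 0)) *
              (p * lam2 * (if 0 < m then (1:ℝ) else 0))
          + ((∑' n₁, pi n₁ (m-1) k) * (if s < k then (1:ℝ) else 0)) *
              (lam2 * (if 0 < m then (1:ℝ) else 0))
          + ((∑' n₁, pi n₁ m (k+1)) * (if k < b then (1:ℝ) else 0)) * mu
          - (pi 0 m (k+1) * (if k < b then (1:ℝ) else 0)) * mu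
          + (pi 0 (m+1) (k+1) * (if k < b then (1:ℝ) else 0)) * mu
          + ((∑' n₁, pi n₁ m (k-1)) * (if 0 < k then (1:ℝ) else 0)) * nu := by
      have e2 : (fun n₁ =>
          (pi (n₁ - 1) m k * lam1 * (if 0 < n₁ then 1 else 0) * (if 0 < k then 1 else 0)
          + pi n₁ (m - 1) k * (p * lam2) * (if 0 < m then 1 else 0) *
              (if 0 < k ∧ k ≤ s then 1 else 0)
          + pi n₁ (m - 1) k * lam2 * (if 0 < m then 1 else 0) * (if s < k then 1 else 0)
          + pi (n₁ + 1) m (k + 1) * mu * (if k < b then 1 else 0)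
          + pi n₁ (m + 1) (k + 1) * mu * (if n₁ = 0 then 1 else 0) * (if k < b then 1 else 0)
          + pi n₁ m (k - 1) * nu * (if 0 < k then 1 else 0)))
          = (fun n₁ =>
            (pi (n₁-1) m k * (if 0 < n₁ then (1:ℝ) else 0)) *
                (lam1 * (if 0 < k then (1:ℝ) else 0))
            + pi n₁ (m-1) k * ((p * lam2) * (if 0 < m then (1:ℝ) else 0) *
                (if 0 < k ∧ k ≤ s then (1:ℝ) else 0))
            + pi n₁ (m-1) k * (lam2 * (if 0 < m then (1:ℝ) else 0) *
                (if s < k then (1:ℝ) else 0))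
            + pi (n₁+1) m (k+1) * (mu * (if k < b then (1:ℝ) else 0))
            + (pi n₁ (m+1) (k+1) * (if n₁ = 0 then (1:ℝ) else 0)) *
                (mu * (if k < b then (1:ℝ) else 0))
            + pi n₁ m (k-1) * (nu * (if 0 < k then (1:ℝ) else 0))) := funext fun n₁ => by ring
      rw [e2,
        Summable.tsum_add ((((s1.add s2).add s3).add s4).add s5) s6,
        Summable.tsum_add (((s1.add s2).add s3).add s4) s5,
        Summable.tsum_add ((s1.add s2).add s3) s4,
        Summable.tsum_add (s1.add s2) s3,
        Summable.tsum_add s1 s2,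
        tsum_mul_right, tsum_mul_right, tsum_mul_right, tsum_mul_right, tsum_mul_right,
        tsum_mul_right,
        tsum_shift_down _ hsk, hD, hE5]
      ring
    rw [← hL, ← hR]
    exact tsum_congr fun n₁ => hGB n₁ m k hk
  -- level equation: sum hEq over k
  have hLevel : ∀ m,
      (∑ k ∈ Finset.Icc 1 s, ∑' n₁, pi n₁ m k) * (p * lam2)
      + (∑ k ∈ Finset.Icc (s+1) b, ∑' n₁, pi n₁ m k) * lam2
      + (if 0 < m then (1:ℝ) else 0) * ((∑ k ∈ Finset.Icc 1 b, pi 0 m k) * mu)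
      = (if 0 < m then (1:ℝ) else 0) *
          ((∑ k ∈ Finset.Icc 1 s, ∑' n₁, pi n₁ (m-1) k) * (p * lam2)
            + (∑ k ∈ Finset.Icc (s+1) b, ∑' n₁, pi n₁ (m-1) k) * lam2)
        + (∑ k ∈ Finset.Icc 1 b, pi 0 (m+1) k) * mu := by
    intro m
    have hf1 : (Finset.range (b+1)).filter (fun k => 0 < k ∧ k ≤ s) = Finset.Icc 1 s := by
      ext k; simp; omega
    have hf2 : (Finset.range (b+1)).filter (fun k => s < k) = Finset.Icc (s+1) b := by
      ext k; simp; omega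
    have hf3 : (Finset.range (b+1)).filter (fun k => k < b) = Finset.range b := by
      ext k; simp; omega
    have hf4 : (Finset.range (b+1)).filter (fun k => 0 < k) = Finset.Icc 1 b := by
      ext k; simp; omega
    have h := Finset.sum_congr rfl
      (fun k hk => hEq m k (Nat.lt_succ_iff.mp (Finset.mem_range.mp hk)))
    simp only [Finset.sum_sub_distrib, Finset.sum_add_distrib] at h
    rw [sum_ind_c b _ _ _ _ hf1, sum_ind_c b _ _ _ _ hf2, sum_ind_c b _ _ _ _ hf3,
      sum_ind_c b _ _ _ _ hf4, sum_ind_c b _ (fun k => pi 0 m k) _ _ hf4,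
      sum_ind_c b _ _ _ _ hf4, sum_ind_c b _ _ _ _ hf1, sum_ind_c b _ _ _ _ hf2,
      sum_ind_c b _ (fun k => ∑' n₁, pi n₁ m (k+1)) _ _ hf3,
      sum_ind_c b _ (fun k => pi 0 m (k+1)) _ _ hf3,
      sum_ind_c b _ (fun k => pi 0 (m+1) (k+1)) _ _ hf3,
      sum_ind_c b _ (fun k => ∑' n₁, pi n₁ m (k-1)) _ _ hf4,
      sum_shift_up b (fun k => ∑' n₁, pi n₁ m k),
      sum_shift_up b (fun k => pi 0 m k),
      sum_shift_up b (fun k => pi 0 (m+1) k),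
      sum_shift_down b (fun k => ∑' n₁, pi n₁ m k)] at h
    have hsplit : (∑ k ∈ Finset.Icc 1 s, ∑' n₁, pi n₁ m k)
        + (∑ k ∈ Finset.Icc (s+1) b, ∑' n₁, pi n₁ m k)
        = ∑ k ∈ Finset.Icc 1 b, ∑' n₁, pi n₁ m k := by
      have h0 := Finset.sum_Ioc_consecutive (fun k => ∑' n₁, pi n₁ m k)
        (Nat.zero_le s) (le_of_lt hsb)
      rw [show Finset.Ioc 0 s = Finset.Icc 1 s by ext k; simp; omega,
        show Finset.Ioc s b = Finset.Icc (s+1) b by ext k; simp,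
        show Finset.Ioc 0 b = Finset.Icc 1 b by ext k; simp; omega] at h0
      exact h0
    linear_combination h - lam1 * hsplit
  -- induction on the level
  have main : ∀ m,
      (∑ k ∈ Finset.Icc 1 s, ∑' n₁, pi n₁ m k) * (p * lam2)
        + (∑ k ∈ Finset.Icc (s+1) b, ∑' n₁, pi n₁ m k) * lam2
      = (∑ k ∈ Finset.Icc 1 b, pi 0 (m+1) k) * mu := by
    intro m
    induction m with
    | zero =>
      have h := hLevel 0
      norm_num at h
      linarith
    | succ m ih =>
      have h := hLevel (m+1)
      simp only [Nat.succ_sub_one, if_pos (Nat.succ_pos m), one_mul] at h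
      norm_num at h
      linarith
  intro n₂
  rw [Summable.tsum_finsetSum (fun k hk => hS n₂ k (by simp at hk; omega)),
    Summable.tsum_finsetSum (fun k hk => hS n₂ k (by simp at hk; omega))]
  exact main n₂
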